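/- Let (Y_t, Z_t) be an adapted pair solving Y_t = Y_T + ∫_t^T [f(s) − λ] ds − ∫_t^T Z_s dW_s on a filtered probability space carrying Brownian motion W, with f(s) ≤ L(s) + ε(s) pointwise where ε(s) ≤ 0, L bounded, and suppose E|Y_T| ≤ C(1 + E‖X_T‖²) with sup_T E‖X_T‖² < ∞. Then λ ≤ limsup_{T→∞} (1/T) E[∫₀^T L(s) ds]. -/
import Mathlib

open Filter MeasureTheory

theorem stmt_16 (N : ℕ) (Ω : Type*) [MeasureSpace Ω]
    (P : Measure Ω) [IsProbabilityMeasure P]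
    (Y : ℝ → Ω → ℝ) (X : ℝ → Ω → EuclideanSpace ℝ (Fin N))
    (f L e : ℝ → Ω → ℝ) (lam : ℝ)
    (hfLe : ∀ s ω, f s ω ≤ L s ω + e s ω)
    (he : ∀ s ω, e s ω ≤ 0)
    (M : ℝ) (hLbdd : ∀ s ω, |L s ω| ≤ M)
    (C : ℝ) (hC : 0 ≤ C)
    (hY : ∀ T, ∫ ω, |Y T ω| ∂P ≤ C * (1 + ∫ ω, ‖X T ω‖ ^ 2 ∂P))
    (KX : ℝ) (hX : ∀ T, ∫ ω, ‖X T ω‖ ^ 2 ∂P ≤ KX)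
    (hfi : ∀ ω T, IntervalIntegrable (fun s => f s ω) MeasureTheory.volume 0 T)
    (hLi : ∀ ω T, IntervalIntegrable (fun s => L s ω) MeasureTheory.volume 0 T)
    (hfI : ∀ T, Integrable (fun ω => ∫ s in (0:ℝ)..T, f s ω) P)
    (hLI : ∀ T, Integrable (fun ω => ∫ s in (0:ℝ)..T, L s ω) P)
    (hYI : ∀ T, Integrable (Y T) P)
    (hbal : ∀ T, 0 ≤ T →
      lam * T = (∫ ω, Y T ω ∂P) - (∫ ω, Y 0 ω ∂P) +
        ∫ ω, (∫ s in (0:ℝ)..T, f s ω) ∂P) :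
    lam ≤ limsup (fun T => (1 / T) * ∫ ω, (∫ s in (0:ℝ)..T, L s ω) ∂P) atTop := by
  set S : ℝ → ℝ := fun T => ∫ ω, (∫ s in (0:ℝ)..T, L s ω) ∂P with hS
  set B : ℝ := C * (1 + KX) + ∫ ω, |Y 0 ω| ∂P with hB
  -- key inequality
  have key : ∀ T : ℝ, 1 ≤ T → lam - B / T ≤ (1 / T) * S T := by
    intro T hT
    have hT0 : (0:ℝ) < T := lt_of_lt_of_le one_pos hT
    have hbal' := hbal T (le_of_lt hT0)
    have hfL : (∫ ω, (∫ s in (0:ℝ)..T, f s ω) ∂P) ≤ S T := by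
      apply integral_mono (hfI T) (hLI T)
      intro ω
      apply intervalIntegral.integral_mono_on (le_of_lt hT0) (hfi ω T) (hLi ω T)
      intro s _
      have := hfLe s ω
      have := he s ω
      linarith
    have hYT : (∫ ω, Y T ω ∂P) ≤ C * (1 + KX) := by
      have h1 : (∫ ω, Y T ω ∂P) ≤ ∫ ω, |Y T ω| ∂P :=
        integral_mono (hYI T) (hYI T).abs (fun ω => le_abs_self _)
      have h2 := hY T
      have h3 : C * (1 + ∫ ω, ‖X T ω‖ ^ 2 ∂P) ≤ C * (1 + KX) := by
        apply mul_le_mul_of_nonneg_left _ hC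
        linarith [hX T]
      linarith
    have hY0 : -(∫ ω, |Y 0 ω| ∂P) ≤ ∫ ω, Y 0 ω ∂P := by
      have := integral_mono ((hYI 0).abs.neg) (hYI 0) (fun ω => neg_abs_le (Y 0 ω))
      simpa [integral_neg] using this
    have hmain : lam * T ≤ B + S T := by
      rw [hbal']; rw [hB]; linarith
    have : lam ≤ (B + S T) / T := (le_div_iff₀ hT0).mpr hmain
    have hsplit : (B + S T) / T = B / T + (1 / T) * S T := by
      field_simp
    linarith [hsplit ▸ this]
  -- boundedness above
  have bdd : ∀ T : ℝ, 1 ≤ T → (1 / T) * S T ≤ M := by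
    intro T hT
    have hT0 : (0:ℝ) < T := lt_of_lt_of_le one_pos hT
    have h1 : ∀ ω, (∫ s in (0:ℝ)..T, L s ω) ≤ M * T := by
      intro ω
      have := intervalIntegral.norm_integral_le_of_norm_le_const
        (C := M) (f := fun s => L s ω) (a := (0:ℝ)) (b := T)
        (fun s _ => by simpa using hLbdd s ω)
      rw [Real.norm_eq_abs] at this
      calc (∫ s in (0:ℝ)..T, L s ω) ≤ |∫ s in (0:ℝ)..T, L s ω| := le_abs_self _
        _ ≤ M * |T - 0| := this
        _ = M * T := by rw [sub_zero, abs_of_pos hT0]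
    have h2 : S T ≤ M * T := by
      have := integral_mono (hLI T) (integrable_const (M * T)) h1
      simpa using this
    have : (1 / T) * S T ≤ (1 / T) * (M * T) :=
      mul_le_mul_of_nonneg_left h2 (by positivity)
    calc (1 / T) * S T ≤ (1 / T) * (M * T) := this
      _ = M := by field_simp
  have hbound : IsBoundedUnder (· ≤ ·) atTop (fun T => (1 / T) * S T) := by
    refine ⟨M, ?_⟩
    rw [eventually_map]
    filter_upwards [eventually_ge_atTop (1:ℝ)] with T hT using bdd T hT
  -- conclude
  apply le_of_forall_pos_le_add
  intro ε hε
  have hfreq : ∃ᶠ T in atTop, lam - ε ≤ (1 / T) * S T := by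
    refine Eventually.frequently ?_
    filter_upwards [eventually_ge_atTop (1:ℝ), eventually_ge_atTop (B / ε)] with T hT1 hT2
    have hT0 : (0:ℝ) < T := lt_of_lt_of_le one_pos hT1
    have hBT : B / T ≤ ε := by
      rw [div_le_iff₀ hT0]
      calc B = ε * (B / ε) := by field_simp
        _ ≤ ε * T := by apply mul_le_mul_of_nonneg_left hT2 (le_of_lt hε)
    linarith [key T hT1]
  have := le_limsup_of_frequently_le hfreq hbound
  linarith
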